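/- Let γ be a convex Dini-smooth Jordan curve with arc-length parametrization g, and f a Lipschitz weak homeomorphism of [0,2π] onto [0,l] whose image under g∘f traverses γ in the positive direction. Then T[f](τ) > 0 for every τ ∈ [0, 2π]. -/

import Mathlib

open MeasureTheory Set Real

noncomputable def ipR (a b : ℂ) : ℝ := ((starRingEnd ℂ) a * b).re

lemma ipR_def (a b : ℂ) : ipR a b = a.re * b.re + a.im * b.im := by
  simp [ipR, Complex.mul_re]

lemma ipR_comm (a b : ℂ) : ipR a b = ipR b a := by simp [ipR_def]; ring

lemma ipR_abs_le (a b : ℂ) : |ipR a b| ≤ ‖a‖ * ‖b‖ :=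
  calc |ipR a b| ≤ ‖(starRingEnd ℂ) a * b‖ := Complex.abs_re_le_norm _
    _ = ‖a‖ * ‖b‖ := by rw [norm_mul, RCLike.norm_conj]

lemma ipR_self (a : ℂ) : ipR a a = ‖a‖^2 := by
  rw [ipR_def, ← Complex.normSq_apply, Complex.sq_norm]

lemma norm_sq_decomp (e : ℂ) (he : ‖e‖ = 1) : e.re^2 + e.im^2 = 1 := by
  have := ipR_self e
  rw [he, ipR_def] at this
  nlinarith [this]

lemma ipR_decomp (e z : ℂ) (he : ‖e‖ = 1) :
    z = (ipR e z : ℝ) • e + (ipR (Complex.I * e) z : ℝ) • (Complex.I * e) := by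
  have h := norm_sq_decomp e he
  apply Complex.ext <;>
    simp [ipR_def, Complex.real_smul, Complex.mul_re, Complex.mul_im, Complex.add_re,
      Complex.add_im]
  · linear_combination (-z.re) * h
  · linear_combination (-z.im) * h

/-- Supporting hyperplane: the tangent line at a boundary point of the convex open set
supports the set, with inner normal `i g'(s)`. -/
lemma support_line (D : Set ℂ) (hD : Convex ℝ D) (hDo : IsOpen D)
    (g : ℝ → ℂ) (hdiff : Differentiable ℝ g)
    (hfr : ∀ t, g t ∈ frontier D)
    (s : ℝ)
    (hs : ∃ ε > (0:ℝ), ∀ u ∈ Ioo (0:ℝ) ε, g s + (u:ℂ) * (Complex.I * deriv g s) ∈ D)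
    (hu : ‖deriv g s‖ = 1) :
    ∀ p ∈ closure D, 0 ≤ ipR (Complex.I * deriv g s) (p - g s) := by
  set e := deriv g s with he
  set n := Complex.I * e with hn
  set x := g s with hx
  -- x ∉ D
  have hxD : x ∉ D := by
    have := hfr s
    rw [hDo.frontier_eq] at this
    exact this.2
  obtain ⟨φ, hφ⟩ := geometric_hahn_banach_open_point hD hDo hxD
  -- φ ≤ φ x on closure D
  have hcl : ∀ p ∈ closure D, φ p ≤ φ x := by
    intro p hp
    have : closure D ⊆ {z | φ z ≤ φ x} :=
      closure_minimal (fun a ha => (hφ a ha).le) (isClosed_le φ.continuous continuous_const)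
    exact this hp
  -- φ (deriv g s) = 0 : s is a global max of φ ∘ g
  have hmax : IsLocalMax (fun t => φ (g t)) s := by
    refine Filter.Eventually.of_forall (fun t => ?_)
    exact hcl (g t) (frontier_subset_closure (hfr t))
  have hder : HasDerivAt (fun t => φ (g t)) (φ e) s :=
    φ.hasFDerivAt.comp_hasDerivAt s (hdiff s).hasDerivAt
  have hφe : φ e = 0 := by
    have := hmax.deriv_eq_zero
    rwa [hder.deriv] at this
  -- φ n < 0
  obtain ⟨ε, hε, hin⟩ := hs
  have hφn : φ n < 0 := by
    have hu2 : x + ((ε/2 : ℝ):ℂ) * n ∈ D := hin (ε/2) ⟨by linarith, by linarith⟩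
    have := hφ _ hu2
    have heq : φ (x + ((ε/2 : ℝ):ℂ) * n) = φ x + (ε/2) * φ n := by
      rw [← Complex.real_smul, map_add, φ.map_smul, smul_eq_mul]
    rw [heq] at this
    nlinarith
  -- decomposition
  intro p hp
  have hdec := ipR_decomp e (p - x) hu
  have : φ (p - x) = ipR n (p - x) * φ n := by
    conv_lhs => rw [hdec]
    rw [map_add, φ.map_smul, φ.map_smul, smul_eq_mul, smul_eq_mul, hφe, ← hn]
    ring
  have hle : φ (p - x) ≤ 0 := by
    have := hcl p hp
    have h2 : φ (p - x) = φ p - φ x := by rw [map_sub]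
    linarith
  rw [this] at hle
  exact nonneg_of_mul_nonpos_right (by linarith [hle] : φ n * ipR n (p - x) ≤ 0) hφn

/-- there is a frontier point strictly on the inner side -/
lemma exists_strict_point (D : Set ℂ) (hD : Convex ℝ D) (hDo : IsOpen D)
    (hDb : Bornology.IsBounded D)
    (x n : ℂ) (hn : ‖n‖ = 1)
    (hs : ∃ ε > (0:ℝ), ∀ u ∈ Ioo (0:ℝ) ε, x + (u:ℂ) * n ∈ D) :
    ∃ q ∈ frontier D, 0 < ipR n (q - x) := by
  obtain ⟨ε, hε, hin⟩ := hs
  set u : ℝ := ε/2 with hu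
  have hu0 : 0 < u := by positivity
  set p : ℂ := x + (u:ℂ) * n with hp
  have hpD : p ∈ D := hin u ⟨hu0, by simp [hu]; linarith⟩
  set S : Set ℝ := {t : ℝ | p + (t:ℂ) * n ∈ D} with hS
  have h0S : (0:ℝ) ∈ S := by simpa [hS] using hpD
  obtain ⟨R, hR⟩ := hDb.subset_closedBall 0
  have hbdd : BddAbove S := by
    refine ⟨R + ‖p‖, fun t ht => ?_⟩
    have h1 : ‖p + (t:ℂ) * n‖ ≤ R := by simpa using hR ht
    have h2 : ‖(t:ℂ) * n‖ ≤ ‖p + (t:ℂ) * n‖ + ‖p‖ := by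
      have := norm_sub_le (p + (t:ℂ)*n) p
      simpa using this
    have h3 : ‖(t:ℂ) * n‖ = |t| := by
      rw [norm_mul, hn, mul_one, Complex.norm_real, Real.norm_eq_abs]
    calc t ≤ |t| := le_abs_self t
      _ ≤ R + ‖p‖ := by rw [← h3]; linarith
  set T : ℝ := sSup S with hT
  -- S is convex, contains [0, T)
  have hSconv : ∀ t, 0 ≤ t → t < T → t ∈ S := by
    intro t ht0 htT
    obtain ⟨t', ht'S, htt'⟩ := exists_lt_of_lt_csSup ⟨0, h0S⟩ htT
    -- t ∈ [0, t'] and S is convex via convexity of D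
    have : p + (t:ℂ) * n ∈ D := by
      have hseg := hD.segment_subset hpD ht'S
      have ht'0 : 0 < t' := lt_of_le_of_lt ht0 htt'
      have : p + (t:ℂ)*n ∈ segment ℝ p (p + (t':ℂ)*n) := by
        have hb0 : 0 ≤ t/t' := by positivity
        have hb1 : t/t' ≤ 1 := by rw [div_le_one ht'0]; linarith
        refine ⟨1 - t/t', t/t', by linarith, hb0, by ring, ?_⟩
        have ht'ne : (t':ℂ) ≠ 0 := by exact_mod_cast ht'0.ne'
        simp only [Complex.real_smul]
        push_cast
        field_simp
        ring
      exact hseg this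
    simpa [hS] using this
  have hT0 : 0 < T := by
    -- D open, p ∈ D, so small positive t in S
    obtain ⟨δ, hδ, hball⟩ := Metric.isOpen_iff.1 hDo p hpD
    have : δ/2 ∈ S := by
      have : p + ((δ/2 : ℝ):ℂ) * n ∈ Metric.ball p δ := by
        simp only [Metric.mem_ball, dist_eq_norm]
        have : ‖p + ((δ/2:ℝ):ℂ)*n - p‖ = δ/2 := by
          rw [add_sub_cancel_left, norm_mul, hn, mul_one, Complex.norm_real,
            Real.norm_eq_abs, abs_of_pos (by linarith)]
        rw [this]; linarith
      simpa [hS] using hball this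
    have := le_csSup hbdd this
    linarith
  set q : ℂ := p + (T:ℂ) * n with hq
  have hqcl : q ∈ closure D := by
    have htend : Filter.Tendsto (fun t : ℝ => p + (t:ℂ) * n) (nhdsWithin T (Iio T)) (nhds q) := by
      apply Filter.Tendsto.mono_left _ nhdsWithin_le_nhds
      exact (Continuous.tendsto (by continuity) T)
    refine mem_closure_of_tendsto htend ?_
    filter_upwards [Ioo_mem_nhdsLT_of_mem (⟨by linarith, le_rfl⟩ : T ∈ Ioc (T/2) T)] with t ht
    · exact hSconv t (by linarith [ht.1]) ht.2
  have hqnD : q ∉ D := by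
    intro hqD
    obtain ⟨δ, hδ, hball⟩ := Metric.isOpen_iff.1 hDo q hqD
    have : T + δ/2 ∈ S := by
      have hmem : p + ((T + δ/2 : ℝ):ℂ) * n ∈ Metric.ball q δ := by
        simp only [Metric.mem_ball, dist_eq_norm]
        have : p + ((T + δ/2 : ℝ):ℂ) * n - q = ((δ/2 : ℝ):ℂ) * n := by
          rw [hq]; push_cast; ring
        rw [this, norm_mul, hn, mul_one, Complex.norm_real, Real.norm_eq_abs,
          abs_of_pos (by linarith)]
        linarith
      simpa [hS] using hball hmem
    have := le_csSup hbdd this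
    linarith
  refine ⟨q, ⟨hqcl, by rwa [hDo.interior_eq]⟩, ?_⟩
  have : q - x = ((u + T : ℝ):ℂ) * n := by rw [hq, hp]; push_cast; ring
  rw [this]
  have : ipR n (((u + T : ℝ):ℂ) * n) = (u + T) * ipR n n := by
    simp [ipR_def, Complex.mul_re, Complex.mul_im]; ring
  rw [this, ipR_self, hn]
  nlinarith

/-- The kernel `K(s,t) = Re[ conj(g(t) − g(s)) · i g'(s) ]`. -/
noncomputable def Kker' (g : ℝ → ℂ) (s t : ℝ) : ℝ :=
  ((starRingEnd ℂ) (g t - g s) * (Complex.I * deriv g s)).re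

lemma hasDerivAt_re_conj_mul (g : ℝ → ℂ) (hg : ContDiff ℝ 1 g) (c : ℂ) (t : ℝ) :
    HasDerivAt (fun u => ((starRingEnd ℂ) (g u) * c).re)
      (((starRingEnd ℂ) (deriv g t) * c).re) t := by
  have hG : HasDerivAt g (deriv g t) t := ((hg.differentiable one_ne_zero) t).hasDerivAt
  have h1 : HasDerivAt (fun u => (starRingEnd ℂ) (g u)) ((starRingEnd ℂ) (deriv g t)) t := by
    have := (Complex.conjCLE.toContinuousLinearMap.hasFDerivAt
      (x := g t)).comp_hasDerivAt t hG
    exact this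
  have h2 := h1.mul_const c
  have h3 := (Complex.reCLM.hasFDerivAt
    (x := (starRingEnd ℂ) (g t) * c)).comp_hasDerivAt t h2
  simpa [Function.comp_def] using h3

lemma kker_bound (g : ℝ → ℂ) (hg : ContDiff ℝ 1 g) (hunit : ∀ s, ‖deriv g s‖ = 1)
    (ω : ℝ → ℝ)
    (hω : ∀ δ ≥ (0:ℝ), ∀ x y : ℝ, |x - y| ≤ δ → ‖deriv g x - deriv g y‖ ≤ ω δ)
    (s₀ s δ : ℝ) (hδ : |s - s₀| ≤ δ) :
    |Kker' g s₀ s| ≤ δ * ω δ := by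
  have hδ0 : 0 ≤ δ := le_trans (abs_nonneg _) hδ
  have hω0 : 0 ≤ ω δ := by
    have := hω δ hδ0 0 0 (by simp [hδ0])
    simpa using this
  set c : ℂ := Complex.I * deriv g s₀ with hc
  have hcn : ‖c‖ = 1 := by rw [hc, norm_mul, Complex.norm_I, one_mul]; exact hunit s₀
  -- derivative of s₀-term vanishes
  have hzero : ((starRingEnd ℂ) (deriv g s₀) * c).re = 0 := by
    rw [hc]
    simp [Complex.mul_re, Complex.mul_im]
    ring
  -- FTC
  have hderiv : ∀ u ∈ Set.uIcc s₀ s,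
      HasDerivAt (fun v => ((starRingEnd ℂ) (g v) * c).re)
        (((starRingEnd ℂ) (deriv g u) * c).re) u :=
    fun u _ => hasDerivAt_re_conj_mul g hg c u
  have hcont : Continuous fun u => ((starRingEnd ℂ) (deriv g u) * c).re := by
    have := hg.continuous_deriv le_rfl
    continuity
  have hint : IntervalIntegrable (fun u => ((starRingEnd ℂ) (deriv g u) * c).re)
      volume s₀ s := hcont.intervalIntegrable s₀ s
  have hftc := intervalIntegral.integral_eq_sub_of_hasDerivAt hderiv hint
  have hK : Kker' g s₀ s =
      ∫ u in s₀..s, ((starRingEnd ℂ) (deriv g u) * c).re := by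
    rw [hftc, Kker', ← hc, map_sub, sub_mul, Complex.sub_re]
  rw [hK]
  have hbound : ∀ u ∈ Set.uIoc s₀ s,
      ‖((starRingEnd ℂ) (deriv g u) * c).re‖ ≤ ω δ := by
    intro u hu
    have hus : |u - s₀| ≤ δ := by
      rcases Set.mem_uIoc.1 hu with h | h
      · rw [abs_sub_comm] at hδ; rw [abs_of_pos (by linarith [h.1, h.2] : 0 < u - s₀)]
        cases' abs_le.1 hδ with _ h2; linarith [h.2, abs_le.1 hδ]
      · rw [abs_of_nonpos (by linarith [h.1, h.2] : u - s₀ ≤ 0)]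
        have := abs_le.1 hδ; rw [abs_sub_comm] at hδ; have := abs_le.1 hδ
        linarith [h.1]
    have heq : ((starRingEnd ℂ) (deriv g u) * c).re =
        ((starRingEnd ℂ) (deriv g u - deriv g s₀) * c).re := by
      rw [map_sub, sub_mul, Complex.sub_re, hzero, sub_zero]
    rw [heq, Real.norm_eq_abs]
    calc |((starRingEnd ℂ) (deriv g u - deriv g s₀) * c).re|
        ≤ ‖deriv g u - deriv g s₀‖ * ‖c‖ := ipR_abs_le _ _
      _ = ‖deriv g u - deriv g s₀‖ := by rw [hcn, mul_one]
      _ ≤ ω δ := hω δ hδ0 u s₀ hus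
  have := intervalIntegral.norm_integral_le_of_norm_le_const hbound
  rw [Real.norm_eq_abs] at this
  calc |∫ u in s₀..s, ((starRingEnd ℂ) (deriv g u) * c).re|
      ≤ ω δ * |s - s₀| := this
    _ ≤ ω δ * δ := by apply mul_le_mul_of_nonneg_left hδ hω0
    _ = δ * ω δ := mul_comm _ _

lemma G1_intervalIntegrable (ω : ℝ → ℝ) (k L r : ℝ) (hk : 0 < k) (hL : 0 < L)
    (hr : 0 < r) (hLr : L * r ≤ k)
    (hωk : IntegrableOn (fun t => ω t / t) (Ioc 0 k)) :
    IntervalIntegrable (fun x => ω (L * x) / x) volume 0 r := by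
  have hbase : IntervalIntegrable (fun t => ω t / t) volume 0 (L * r) := by
    rw [intervalIntegrable_iff, uIoc_of_le (by positivity)]
    exact hωk.mono_set (Ioc_subset_Ioc le_rfl hLr)
  have h1 := hbase.comp_mul_left (c := L)
  rw [zero_div, mul_div_cancel_left₀ _ hL.ne'] at h1
  have h2 := h1.const_mul L
  have heq : (fun x => L * (ω (L * x) / (L * x))) = fun x => ω (L * x) / x := by
    funext x
    rcases eq_or_ne x 0 with h | h
    · simp [h]
    · field_simp
  rwa [heq] at h2

/-- The kernel `K(s,t) = Re[ conj(g(t) − g(s)) · i g'(s) ]`. -/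
noncomputable def Kker (g : ℝ → ℂ) (s t : ℝ) : ℝ :=
  ((starRingEnd ℂ) (g t - g s) * (Complex.I * deriv g s)).re

/-- The operator `T[f](τ) = ∫₀^{2π} K(f(τ), f(t)) / (2 sin²((t−τ)/2)) dt`. -/
noncomputable def Topf (g : ℝ → ℂ) (f : ℝ → ℝ) (τ : ℝ) : ℝ :=
  ∫ t in (0:ℝ)..(2 * π), Kker g (f τ) (f t) / (2 * Real.sin ((t - τ) / 2) ^ 2)

set_option maxHeartbeats 2000000 in
/-- For a convex Dini-smooth Jordan curve, positively oriented, and a Lipschitz weak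
homeomorphism `f`, the operator `T[f]` is strictly positive. -/
theorem T_pos_of_convex (l : ℝ) (hl : 0 < l) (L : NNReal)
    (D : Set ℂ) (hD : Convex ℝ D) (hDo : IsOpen D) (hDb : Bornology.IsBounded D)
    (hDne : D.Nonempty)
    (g : ℝ → ℂ) (hg : ContDiff ℝ 1 g)
    (hper : ∀ s, g (s + l) = g s)
    (hunit : ∀ s, ‖deriv g s‖ = 1)
    (hfront : g '' Icc 0 l = frontier D)
    (hginj : InjOn g (Ico 0 l))
    -- positive orientation: the inner unit normal `i g'(s)` points into `D`
    (horient : ∀ s, ∃ ε > (0:ℝ), ∀ u ∈ Ioo (0:ℝ) ε,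
        g s + (u : ℂ) * (Complex.I * deriv g s) ∈ D)
    (ω : ℝ → ℝ)
    (hω : ∀ δ ≥ (0:ℝ), ∀ x y : ℝ, |x - y| ≤ δ → ‖deriv g x - deriv g y‖ ≤ ω δ)
    (hωD : ∃ k > (0:ℝ), IntegrableOn (fun t => ω t / t) (Ioc 0 k))
    (f : ℝ → ℝ) (hf : Monotone f) (hfl : LipschitzWith L f) (hf0 : f 0 = 0)
    (hfqp : ∀ t, f (t + 2 * π) = f t + l) :
    ∀ τ ∈ Icc (0:ℝ) (2 * π), 0 < Topf g f τ := by
  intro τ hτ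
  have hπ : (0:ℝ) < π := Real.pi_pos
  obtain ⟨k, hk, hωk⟩ := hωD
  have hgc : Continuous g := hg.continuous
  have hgd : Differentiable ℝ g := hg.differentiable one_ne_zero
  have hfc : Continuous f := hfl.continuous
  have hperiodic : Function.Periodic g l := hper
  have hfr : ∀ t, g t ∈ frontier D := by
    intro t
    obtain ⟨y, hy, hgy⟩ := hperiodic.exists_mem_Ico₀ hl t
    rw [hgy, ← hfront]
    exact ⟨y, ⟨hy.1, hy.2.le⟩, rfl⟩
  have hf2π : f (2 * π) = l := by
    have := hfqp 0
    simpa [hf0] using this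
  have hLpos : (0:ℝ) < (L:ℝ) := by
    rcases lt_or_ge 0 (L:ℝ) with h | h
    · exact h
    · exfalso
      have := hfl.dist_le_mul 0 (2 * π)
      rw [hf0, hf2π] at this
      have hd : dist (0:ℝ) l = l := by
        rw [Real.dist_eq, zero_sub, abs_neg, abs_of_pos hl]
      have hd2 : dist (0:ℝ) (2*π) = 2*π := by
        rw [Real.dist_eq, zero_sub, abs_neg, abs_of_pos (by positivity)]
      rw [hd, hd2] at this
      nlinarith
  set s₀ : ℝ := f τ with hs₀
  set c : ℂ := Complex.I * deriv g s₀ with hc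
  have hcn : ‖c‖ = 1 := by rw [hc, norm_mul, Complex.norm_I, one_mul]; exact hunit s₀
  -- nonnegativity of the kernel
  have hK0 : ∀ s t : ℝ, 0 ≤ Kker g s t := by
    intro s t
    have := support_line D hD hDo g hgd hfr s (horient s) (hunit s) (g t)
      (frontier_subset_closure (hfr t))
    rw [Kker]
    rw [ipR_comm] at this
    exact this
  -- the integrand
  set F : ℝ → ℝ := fun t => Kker g (f τ) (f t) / (2 * Real.sin ((t - τ) / 2) ^ 2) with hF
  have hFnn : ∀ t, 0 ≤ F t := fun t => div_nonneg (hK0 _ _) (by positivity)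
  have hnumc : Continuous fun t => Kker g (f τ) (f t) := by
    unfold Kker
    exact Complex.continuous_re.comp
      (((continuous_star.comp ((hgc.comp hfc).sub continuous_const)).mul continuous_const))
  have hFm : Measurable F := by
    apply Measurable.div hnumc.measurable
    exact (continuous_const.mul ((Real.continuous_sin.comp
      ((continuous_id.sub continuous_const).div_const 2)).pow 2)).measurable
  -- shifts
  have hsh1 : ∀ t, g (f (t - 2 * π)) = g (f t) := by
    intro t
    have h1 : f t = f (t - 2 * π) + l := by
      have := hfqp (t - 2 * π)
      rw [sub_add_cancel] at this
      rw [this]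
    rw [h1, hper]
  have hsh2 : ∀ t, g (f (t + 2 * π)) = g (f t) := by
    intro t
    rw [hfqp t, hper]
  -- radius
  set r : ℝ := min π (k / L) with hr
  have hr0 : 0 < r := lt_min hπ (by positivity)
  have hrπ : r ≤ π := min_le_left _ _
  have hLr : (L:ℝ) * r ≤ k := by
    calc (L:ℝ) * r ≤ (L:ℝ) * (k / L) := by
          apply mul_le_mul_of_nonneg_left (min_le_right _ _) hLpos.le
      _ = k := by field_simp
  have hG₁ : IntervalIntegrable (fun x => ω ((L:ℝ) * x) / x) volume 0 r :=
    G1_intervalIntegrable ω k L r hk hLpos hr0 hLr hωk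
  -- key pointwise bound near singularities
  have key : ∀ σ : ℝ, (σ = 0 ∨ σ = 2*π ∨ σ = -(2*π)) → ∀ t, |t - (τ + σ)| ≤ r →
      |F t| ≤ (π^2 * L / 2) * (ω ((L:ℝ) * |t - (τ + σ)|) / |t - (τ + σ)|) := by
    intro σ hσ t hm
    set m : ℝ := |t - (τ + σ)| with hmdef
    have hm0 : 0 ≤ m := abs_nonneg _
    have hω0 : 0 ≤ ω ((L:ℝ) * m) := by
      have := hω ((L:ℝ)*m) (by positivity) 0 0 (by simp; positivity)
      simpa using this
    -- numerator equality and bound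
    have hgeq : g (f t) = g (f (t - σ)) := by
      rcases hσ with h | h | h
      · rw [h, sub_zero]
      · rw [h, hsh1]
      · rw [h]
        rw [sub_neg_eq_add, hsh2]
    have hknum : Kker g s₀ (f t) = Kker' g s₀ (f (t - σ)) := by
      rw [Kker, Kker', hgeq]
    have hlip : |f (t - σ) - s₀| ≤ (L:ℝ) * m := by
      have := hfl.dist_le_mul (t - σ) τ
      rw [Real.dist_eq, Real.dist_eq] at this
      have he : t - σ - τ = t - (τ + σ) := by ring
      rw [he] at this
      exact this
    have hnum_le : |Kker g s₀ (f t)| ≤ (L:ℝ) * m * ω ((L:ℝ) * m) := by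
      rw [hknum]
      exact kker_bound g hg hunit ω hω s₀ (f (t - σ)) ((L:ℝ)*m) hlip
    -- denominator equality
    have hden : Real.sin ((t - τ)/2)^2 = Real.sin ((t - (τ + σ))/2)^2 := by
      rcases hσ with h | h | h
      · rw [h]; ring_nf
      · rw [h]
        have he : (t - τ)/2 = (t - (τ + 2*π))/2 + π := by ring
        rw [he, Real.sin_add_pi]
        ring
      · rw [h]
        have he : (t - τ)/2 = (t - (τ + -(2*π)))/2 - π := by ring
        rw [he, Real.sin_sub_pi]
        ring
    rcases eq_or_lt_of_le hm0 with hmz | hmpos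
    · -- m = 0 : t = τ + σ
      have htστ : t = τ + σ := by
        have := abs_eq_zero.1 hmz.symm
        linarith [this]
      rcases hσ with h | h | h
      · have : Kker g s₀ (f t) = 0 := by
          rw [htστ, h, add_zero]
          simp [Kker, hs₀]
        rw [hF]
        simp only [← hs₀, this]
        rw [zero_div, abs_zero]
        positivity
      all_goals {
        have hsz : Real.sin ((t - τ)/2)^2 = 0 := by
          rw [hden, htστ]
          simp
        rw [hF]
        simp only [hsz]
        rw [mul_zero, div_zero, abs_zero]
        positivity }
    · -- m > 0
      have hmπ : m / 2 ≤ π / 2 := by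
        have : m ≤ π := le_trans hm hrπ
        linarith
      have hsin : m / π ≤ Real.sin (m / 2) := by
        have := Real.mul_le_sin (x := m/2) (by linarith) hmπ
        calc m / π = 2 / π * (m / 2) := by field_simp
          _ ≤ Real.sin (m/2) := this
      have hsq : Real.sin ((t - (τ+σ))/2)^2 = Real.sin (m/2)^2 := by
        rcases abs_cases (t - (τ + σ)) with ⟨h1, _⟩ | ⟨h1, _⟩
        · rw [hmdef, h1]
        · rw [hmdef, h1]
          have : -(t - (τ+σ))/2 = -((t - (τ+σ))/2) := by ring
          rw [this, Real.sin_neg]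
          ring
      have hsinpos : 0 < Real.sin (m/2) := lt_of_lt_of_le (by positivity) hsin
      have hdenge : 2 * (m/π)^2 ≤ 2 * Real.sin ((t - τ)/2)^2 := by
        rw [hden, hsq]
        have := pow_le_pow_left₀ (by positivity) hsin 2
        linarith
      have hdenpos : (0:ℝ) < 2 * (m/π)^2 := by positivity
      have habs : |F t| = |Kker g s₀ (f t)| / (2 * Real.sin ((t - τ)/2)^2) := by
        rw [hF]
        rw [abs_div]
        congr 1
        rw [abs_of_nonneg]
        positivity
      rw [habs]
      calc |Kker g s₀ (f t)| / (2 * Real.sin ((t - τ)/2)^2)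
          ≤ ((L:ℝ) * m * ω ((L:ℝ)*m)) / (2 * (m/π)^2) := by
            apply div_le_div₀ (by positivity) hnum_le hdenpos hdenge
        _ = (π^2 * L / 2) * (ω ((L:ℝ) * m) / m) := by
            field_simp
  -- integrability near each singularity
  have hIball : ∀ σ : ℝ, (σ = 0 ∨ σ = 2*π ∨ σ = -(2*π)) →
      IntegrableOn F (Ioc (τ + σ - r) (τ + σ + r)) volume := by
    intro σ hσ
    set t₀ : ℝ := τ + σ with ht₀
    have hright : IntegrableOn F (Ioc t₀ (t₀ + r)) volume := by
      have hb : IntegrableOn (fun t => (π^2 * L / 2) * (ω ((L:ℝ) * (t - t₀)) / (t - t₀)))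
          (Ioc t₀ (t₀ + r)) volume := by
        have h1 := (hG₁.comp_sub_right t₀).const_mul (π^2 * L / 2)
        rw [zero_add, add_comm r t₀] at h1
        rw [intervalIntegrable_iff, uIoc_of_le (by linarith)] at h1
        exact h1
      apply Integrable.mono' hb (hFm.aestronglyMeasurable.restrict)
      rw [ae_restrict_iff' measurableSet_Ioc]
      apply ae_of_all
      intro t ht
      have h1 : |t - t₀| ≤ r := by
        rw [abs_of_pos (by linarith [ht.1])]
        linarith [ht.2]
      have := key σ hσ t (by rwa [← ht₀])
      rw [Real.norm_eq_abs]
      calc |F t| ≤ (π^2 * L / 2) * (ω ((L:ℝ) * |t - t₀|) / |t - t₀|) := by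
            rw [ht₀]; exact this
        _ = (π^2 * L / 2) * (ω ((L:ℝ) * (t - t₀)) / (t - t₀)) := by
            rw [abs_of_pos (by linarith [ht.1])]
    have hleft : IntegrableOn F (Ioc (t₀ - r) t₀) volume := by
      have hb : IntegrableOn (fun t => (π^2 * L / 2) * (ω ((L:ℝ) * (t₀ - t)) / (t₀ - t)))
          (Ioc (t₀ - r) t₀) volume := by
        have h1 := (hG₁.comp_sub_left t₀).const_mul (π^2 * L / 2)
        rw [sub_zero] at h1
        rw [intervalIntegrable_iff, uIoc_comm, uIoc_of_le (by linarith)] at h1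
        exact h1
      apply Integrable.mono' hb (hFm.aestronglyMeasurable.restrict)
      rw [ae_restrict_iff' measurableSet_Ioc]
      apply ae_of_all
      intro t ht
      have h1 : |t - t₀| ≤ r := by
        rw [abs_of_nonpos (by linarith [ht.2])]
        linarith [ht.1]
      have := key σ hσ t (by rwa [← ht₀])
      rw [Real.norm_eq_abs]
      calc |F t| ≤ (π^2 * L / 2) * (ω ((L:ℝ) * |t - t₀|) / |t - t₀|) := by
            rw [ht₀]; exact this
        _ = (π^2 * L / 2) * (ω ((L:ℝ) * (t₀ - t)) / (t₀ - t)) := by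
            rw [abs_of_nonpos (by linarith [ht.2]), neg_sub]
    have := hleft.union hright
    rwa [Ioc_union_Ioc_eq_Ioc (by linarith) (by linarith)] at this
  -- the compact part
  set U : Set ℝ := Ioo (τ - 2*π - r) (τ - 2*π + r) ∪ Ioo (τ - r) (τ + r)
      ∪ Ioo (τ + 2*π - r) (τ + 2*π + r) with hU
  have hUopen : IsOpen U := (((isOpen_Ioo.union isOpen_Ioo).union isOpen_Ioo))
  set C : Set ℝ := Icc 0 (2*π) \ U with hC
  have hCcomp : IsCompact C := (isCompact_Icc).diff hUopen
  have hsinC : ∀ t ∈ C, Real.sin ((t - τ)/2) ≠ 0 := by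
    intro t ht hsin0
    obtain ⟨n, hn⟩ := Real.sin_eq_zero_iff.1 hsin0
    have htmem := ht.1
    have htU := ht.2
    have hn2 : t - τ = 2 * π * n := by
      have : (n:ℝ) * π = (t - τ)/2 := hn
      linarith
    have hbd : |(n:ℝ)| ≤ 1 := by
      have h1 : |t - τ| ≤ 2 * π := by
        rw [abs_le]
        constructor <;> [linarith [htmem.1, hτ.2]; linarith [htmem.2, hτ.1]]
      rw [hn2, abs_mul] at h1
      have h2 : |2 * π| = 2 * π := abs_of_pos (by positivity)
      rw [h2] at h1
      nlinarith
    have hn1a : -1 ≤ n := by exact_mod_cast neg_le_of_abs_le hbd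
    have hn1b : n ≤ 1 := by exact_mod_cast le_of_abs_le hbd
    interval_cases n
    · apply htU
      rw [hU]
      have : t = τ - 2*π := by push_cast at hn2; linarith
      left; left
      rw [this]
      constructor <;> linarith
    · apply htU
      rw [hU]
      have : t = τ := by push_cast at hn2; linarith
      left; right
      rw [this]
      constructor <;> linarith
    · apply htU
      rw [hU]
      have : t = τ + 2*π := by push_cast at hn2; linarith
      right
      rw [this]
      constructor <;> linarith
  have hIC : IntegrableOn F C volume := by
    apply ContinuousOn.integrableOn_compact hCcomp
    apply ContinuousOn.div hnumc.continuousOn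
    · exact (continuous_const.mul ((Real.continuous_sin.comp
        ((continuous_id.sub continuous_const).div_const 2)).pow 2)).continuousOn
    · intro t ht
      have := hsinC t ht
      positivity
  -- total integrability
  have hIcc : IntegrableOn F (Icc 0 (2*π)) volume := by
    have h1 := hIball 0 (Or.inl rfl)
    have h2 := hIball (2*π) (Or.inr (Or.inl rfl))
    have h3 := hIball (-(2*π)) (Or.inr (Or.inr rfl))
    have hcover : Icc 0 (2*π) ⊆ C ∪ (Ioc (τ + -(2*π) - r) (τ + -(2*π) + r)
        ∪ Ioc (τ + 0 - r) (τ + 0 + r) ∪ Ioc (τ + 2*π - r) (τ + 2*π + r)) := by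
      intro t ht
      by_cases htU : t ∈ U
      · right
        rcases htU with (h | h) | h
        · left; left
          exact ⟨by linarith [h.1], by linarith [h.2]⟩
        · left; right
          exact ⟨by linarith [h.1], by linarith [h.2]⟩
        · right
          exact ⟨by linarith [h.1], by linarith [h.2]⟩
      · left
        exact ⟨ht, htU⟩
    exact ((hIC.union ((h3.union h1).union h2)).mono_set hcover)
  have hIoc : IntegrableOn F (Ioc 0 (2*π)) volume :=
    hIcc.mono_set Ioc_subset_Icc_self
  -- find a point of strict positivity
  obtain ⟨q, hqfr, hqpos⟩ := exists_strict_point D hD hDo hDb (g s₀) c hcn (by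
    rw [hc, hs₀]; exact horient (f τ))
  rw [← hfront] at hqfr
  obtain ⟨s₁, hs₁mem, hs₁⟩ := hqfr
  have hKs₁ : 0 < Kker g s₀ s₁ := by
    have h0 : Kker g s₀ s₁ = ipR c (g s₁ - g s₀) := by
      rw [Kker, ← hc]
      exact ipR_comm _ _
    rw [h0, hs₁]
    exact hqpos
  -- surjectivity: find t₁' with f t₁' = s₁
  have hsurj : s₁ ∈ f '' Icc 0 (2*π) := by
    apply intermediate_value_Icc (by positivity) hfc.continuousOn
    rw [hf0, hf2π]
    exact hs₁mem
  obtain ⟨t₁', ht₁'mem, ht₁'⟩ := hsurj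
  -- adjust to be in (0, 2π]
  have hg2π0 : g (f (2*π)) = g (f 0) := by
    rw [hf0, hf2π]
    have := hper 0
    rw [zero_add] at this
    rw [this]
  set t₁ : ℝ := if t₁' = 0 then 2*π else t₁' with ht₁
  have ht₁mem : t₁ ∈ Ioc 0 (2*π) := by
    rw [ht₁]
    split_ifs with h
    · exact ⟨by positivity, le_rfl⟩
    · exact ⟨lt_of_le_of_ne ht₁'mem.1 (Ne.symm h), ht₁'mem.2⟩
  have ht₁K : 0 < Kker g s₀ (f t₁) := by
    rw [ht₁]
    split_ifs with h
    · have : Kker g s₀ (f (2*π)) = Kker g s₀ (f 0) := by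
        rw [Kker, Kker, hg2π0]
      have h2 : f 0 = s₁ := by rw [← h, ht₁']
      rw [this, h2]
      exact hKs₁
    · rw [ht₁']
      exact hKs₁
  -- sin at t₁ nonzero
  have ht₁sin : Real.sin ((t₁ - τ)/2) ≠ 0 := by
    intro hsin0
    obtain ⟨n, hn⟩ := Real.sin_eq_zero_iff.1 hsin0
    have hn2 : t₁ - τ = 2 * π * n := by linarith [hn]
    have hbd : |(n:ℝ)| ≤ 1 := by
      have h1 : |t₁ - τ| ≤ 2 * π := by
        rw [abs_le]
        constructor <;> [linarith [ht₁mem.1, hτ.2]; linarith [ht₁mem.2, hτ.1]]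
      rw [hn2, abs_mul, abs_of_pos (by positivity : (0:ℝ) < 2*π)] at h1
      nlinarith
    have hn1a : -1 ≤ n := by exact_mod_cast neg_le_of_abs_le hbd
    have hn1b : n ≤ 1 := by exact_mod_cast le_of_abs_le hbd
    interval_cases n
    · -- t₁ = τ - 2π ≤ 0 < t₁, contradiction
      push_cast at hn2
      linarith [ht₁mem.1, hτ.2]
    · -- t₁ = τ : Kker = 0
      push_cast at hn2
      have : t₁ = τ := by linarith
      rw [this] at ht₁K
      have : Kker g s₀ (f τ) = 0 := by simp [Kker, hs₀]
      linarith [ht₁K, this]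
    · -- t₁ = τ + 2π : τ = 0, t₁ = 2π
      push_cast at hn2
      have hτ0 : τ = 0 := by linarith [ht₁mem.2, hτ.1]
      have ht₁2π : t₁ = 2*π := by linarith
      have : Kker g s₀ (f t₁) = 0 := by
        rw [ht₁2π, Kker, hg2π0, hs₀, hτ0, sub_self]
        simp
      linarith [ht₁K, this]
  -- open set of positivity
  have hsinc : Continuous fun t : ℝ => Real.sin ((t - τ)/2) :=
    Real.continuous_sin.comp ((continuous_id.sub continuous_const).div_const 2)
  set V : Set ℝ := {t : ℝ | 0 < Kker g s₀ (f t)} ∩ {t : ℝ | Real.sin ((t - τ)/2) ≠ 0}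
    with hVdef
  have hV : IsOpen V := by
    apply IsOpen.inter
    · exact isOpen_lt continuous_const (by rw [hs₀]; exact hnumc)
    · exact isOpen_compl_singleton.preimage hsinc
  have ht₁V : t₁ ∈ V := ⟨ht₁K, ht₁sin⟩
  obtain ⟨η, hη, hball⟩ := Metric.isOpen_iff.1 hV t₁ ht₁V
  set a : ℝ := max (t₁ - η/2) (t₁/2) with ha
  have ha1 : a < t₁ := max_lt (by linarith) (by linarith [ht₁mem.1])
  have hJV : Ioo a t₁ ⊆ V := by
    intro t ht
    apply hball
    rw [Metric.mem_ball, Real.dist_eq, abs_of_neg (by linarith [ht.2] : t - t₁ < 0)]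
    have := le_max_left (t₁ - η/2) (t₁/2)
    have h2 := ht.1
    simp only [ha] at h2
    linarith [le_max_left (t₁ - η/2) (t₁/2)]
  have hJsub : Ioo a t₁ ⊆ Function.support F ∩ Ioc 0 (2*π) := by
    intro t ht
    obtain ⟨hK, hsin⟩ := hJV ht
    constructor
    · apply ne_of_gt
      apply div_pos
      · rw [hs₀] at hK; exact hK
      · have h3 : Real.sin ((t - τ)/2)^2 ≠ 0 := pow_ne_zero 2 hsin
        have h4 : 0 < Real.sin ((t - τ)/2)^2 := lt_of_le_of_ne (sq_nonneg _) (Ne.symm h3)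
        linarith
    · refine ⟨?_, by linarith [ht.2, ht₁mem.2]⟩
      have := le_max_right (t₁ - η/2) (t₁/2)
      have h2 := ht.1
      simp only [ha] at h2
      linarith [ht₁mem.1]
  have hμpos : 0 < volume (Function.support F ∩ Ioc 0 (2*π)) := by
    apply lt_of_lt_of_le _ (measure_mono hJsub)
    rw [Real.volume_Ioo]
    exact ENNReal.ofReal_pos.2 (by linarith)
  have hae : 0 ≤ᵐ[volume.restrict (Ioc 0 (2*π))] F :=
    ae_of_all _ fun t => hFnn t
  have hTopf : Topf g f τ = ∫ t in Ioc 0 (2*π), F t := by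
    rw [Topf, intervalIntegral.integral_of_le (by positivity)]
  rw [hTopf]
  exact (MeasureTheory.setIntegral_pos_iff_support_of_nonneg_ae hae hIoc).2 hμpos
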